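/- Let n ≥ 1, k ≥ 0 be natural numbers and (a_1, ..., a_n) natural numbers with a_1 + ... + a_n ≤ k, and set a_0 = k - (a_1 + ... + a_n). Then (1/π^n) ∫_{ℂ^n} (∏_{i=1}^n |z_i|^{2 a_i}) / (1 + Σ_{i=1}^n |z_i|²)^{k+n+1} dλ(z) = (a_0! · a_1! ⋯ a_n!) / (k+n)!. -/

import Mathlib

open MeasureTheory
open Set Filter Topology
open scoped ENNReal

section FSaux

lemma Kpos (c : ℝ) (hc : 0 < c) (t : ℝ) (ht : 0 ≤ t) : (0:ℝ) < c + t := by linarith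

lemma Kcont (a m : ℕ) (c : ℝ) (hc : 0 < c) :
    ContinuousOn (fun t : ℝ => t ^ a * ((c + t) ^ m)⁻¹) (Ici 0) := by
  refine (continuous_pow a).continuousOn.mul (ContinuousOn.inv₀ (by fun_prop) ?_)
  intro t ht
  exact pow_ne_zero _ (Kpos c hc t ht).ne'

lemma Kint (a b : ℕ) (c : ℝ) (hc : 0 < c) :
    IntegrableOn (fun t : ℝ => t ^ a * ((c + t) ^ (a + b + 2))⁻¹) (Ioi 0) := by
  have hcont := Kcont a (a + b + 2) c hc
  rw [← Ioc_union_Ioi_eq_Ioi (zero_le_one' ℝ)]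
  refine IntegrableOn.union ?_ ?_
  · exact ((hcont.mono Icc_subset_Ici_self).integrableOn_compact
      isCompact_Icc).mono_set Ioc_subset_Icc_self
  · have hlt : ((a:ℝ) - (a + b + 2)) < -1 := by push_cast; linarith
    refine (integrableOn_Ioi_rpow_of_lt hlt zero_lt_one).mono' ?_ ?_
    · exact (hcont.mono fun t (ht : t ∈ Ioi 1) => le_of_lt (lt_trans zero_lt_one ht)).aestronglyMeasurable
        measurableSet_Ioi
    · filter_upwards [ae_restrict_mem measurableSet_Ioi] with t ht
      have ht1 : (1:ℝ) ≤ t := le_of_lt ht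
      have ht0 : (0:ℝ) < t := lt_of_lt_of_le zero_lt_one ht1
      have e1 : t ^ ((a:ℝ)) = t ^ a := Real.rpow_natCast t a
      have e2 : t ^ ((a:ℝ) + b + 2) = t ^ (a + b + 2) := by
        rw [show ((a:ℝ) + b + 2) = ((a + b + 2 : ℕ) : ℝ) by push_cast; ring, Real.rpow_natCast]
      rw [Real.norm_eq_abs, abs_of_nonneg (by positivity), Real.rpow_sub ht0, e1, e2,
        div_eq_mul_inv]
      gcongr
      all_goals first | positivity | linarith

lemma KderivBase (b : ℕ) (c t : ℝ) (h : 0 < c + t) :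
    HasDerivAt (fun t : ℝ => -((b:ℝ)+1)⁻¹ * ((c + t) ^ (b+1))⁻¹)
      (((c + t) ^ (b+2))⁻¹) t := by
  have h1 : HasDerivAt (fun t : ℝ => (c + t) ^ (b+1))
      (((b:ℝ)+1) * (c + t) ^ b) t := by
    have := ((hasDerivAt_id t).const_add c).fun_pow (b+1)
    simpa using this
  have h2 := (h1.fun_inv (pow_ne_zero _ h.ne')).const_mul (-((b:ℝ)+1)⁻¹)
  refine h2.congr_deriv ?_
  have hb : ((b:ℝ)+1) ≠ 0 := by positivity
  field_simp
  ring

lemma KderivStep (a m : ℕ) (c t : ℝ) (h : 0 < c + t) :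
    HasDerivAt (fun t : ℝ => t ^ (a+1) * ((c + t) ^ (m+1))⁻¹)
      (((a:ℝ)+1) * (t ^ a * ((c+t)^(m+1))⁻¹) - ((m:ℝ)+1) * (t^(a+1) * ((c+t)^(m+2))⁻¹)) t := by
  have h1 : HasDerivAt (fun t : ℝ => (c + t) ^ (m+1))
      (((m:ℝ)+1) * (c + t) ^ m) t := by
    have := ((hasDerivAt_id t).const_add c).fun_pow (m+1)
    simpa using this
  have h2 := (hasDerivAt_pow (a+1) t).mul (h1.fun_inv (pow_ne_zero _ h.ne'))
  refine h2.congr_deriv ?_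
  have hct : (c + t) ≠ 0 := h.ne'
  rw [Nat.add_sub_cancel]; push_cast
  field_simp
  ring

lemma KtendstoBase (b : ℕ) (c : ℝ) (hc : 0 < c) :
    Filter.Tendsto (fun t : ℝ => -((b:ℝ)+1)⁻¹ * ((c + t) ^ (b+1))⁻¹) atTop (nhds 0) := by
  have h1 : Filter.Tendsto (fun t : ℝ => (c + t) ^ (b+1)) atTop atTop :=
    (tendsto_pow_atTop (Nat.succ_ne_zero b)).comp (tendsto_atTop_add_const_left _ c tendsto_id)
  simpa using h1.inv_tendsto_atTop.const_mul (-((b:ℝ)+1)⁻¹)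

lemma KtendstoStep (a m : ℕ) (hm : a + 1 ≤ m) (c : ℝ) (hc : 0 < c) :
    Filter.Tendsto (fun t : ℝ => t ^ (a+1) * ((c + t) ^ (m+1))⁻¹) atTop (nhds 0) := by
  have hb : Filter.Tendsto (fun t : ℝ => (t ^ (m - a))⁻¹) atTop (nhds 0) :=
    (tendsto_pow_atTop (by omega)).inv_tendsto_atTop
  refine tendsto_of_tendsto_of_tendsto_of_le_of_le' tendsto_const_nhds hb ?_ ?_
  · filter_upwards [Filter.eventually_ge_atTop (0:ℝ)] with t ht
    positivity
  · filter_upwards [Filter.eventually_ge_atTop (0:ℝ)] with t ht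
    have h1 : t ^ (m+1) ≤ (c + t) ^ (m+1) := by
      gcongr; linarith
    have h2 : (0:ℝ) < t ^ (m+1) ∨ t = 0 := by
      rcases eq_or_lt_of_le ht with h | h
      · exact Or.inr h.symm
      · exact Or.inl (by positivity)
    rcases h2 with h2 | h2
    · have ht0 : 0 < t := by
        rcases eq_or_lt_of_le ht with h | h
        · exfalso; rw [← h] at h2; simp [zero_pow] at h2
        · exact h
      calc t ^ (a+1) * ((c + t) ^ (m+1))⁻¹ ≤ t ^ (a+1) * (t ^ (m+1))⁻¹ := by gcongr
        _ = (t ^ (m - a))⁻¹ := by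
            have e : t ^ (m+1) = t ^ (a+1) * t ^ (m - a) := by
              rw [← pow_add]; congr 1; omega
            rw [e, mul_inv, ← mul_assoc, mul_inv_cancel₀ (by positivity), one_mul]
    · simp [h2]

lemma Kval (a b : ℕ) (c : ℝ) (hc : 0 < c) :
    ∫ t in Ioi (0:ℝ), t ^ a * ((c + t) ^ (a + b + 2))⁻¹
      = (a.factorial * b.factorial / (a + b + 1).factorial) * (c ^ (b+1))⁻¹ := by
  induction a with
  | zero =>
      have hderiv : ∀ t ∈ Ici (0:ℝ), HasDerivAt
          (fun t : ℝ => -((b:ℝ)+1)⁻¹ * ((c + t) ^ (b+1))⁻¹) (((c + t) ^ (b+2))⁻¹) t :=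
        fun t ht => KderivBase b c t (Kpos c hc t ht)
      have := integral_Ioi_of_hasDerivAt_of_tendsto' hderiv
        (by simpa using Kint 0 b c hc) (KtendstoBase b c hc)
      simp only [add_zero] at this
      rw [show (0:ℕ) + b + 2 = b + 2 by ring, show (0:ℕ) + b + 1 = b + 1 by ring]
      simp only [pow_zero, one_mul] at this ⊢
      rw [this]
      rw [Nat.factorial_zero, Nat.factorial_succ]
      push_cast
      field_simp
      ring
  | succ a ih =>
      have hderiv : ∀ t ∈ Ici (0:ℝ), HasDerivAt
          (fun t : ℝ => t ^ (a+1) * ((c + t) ^ (a+b+2))⁻¹)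
          (((a:ℝ)+1) * (t ^ a * ((c+t)^(a+b+2))⁻¹)
            - ((a:ℝ)+b+2) * (t^(a+1) * ((c+t)^(a+b+3))⁻¹)) t := by
        intro t ht
        have := KderivStep a (a+b+1) c t (Kpos c hc t ht)
        convert this using 2 <;> first | omega | (push_cast; ring)
      have hint1 : IntegrableOn (fun t : ℝ => ((a:ℝ)+1) * (t ^ a * ((c+t)^(a+b+2))⁻¹)) (Ioi 0) :=
        (Kint a b c hc).const_mul _
      have hint2 : IntegrableOn (fun t : ℝ => ((a:ℝ)+b+2) * (t^(a+1) * ((c+t)^(a+b+3))⁻¹)) (Ioi 0) := by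
        have := (Kint (a+1) b c hc).const_mul ((a:ℝ)+b+2)
        simpa [IntegrableOn, show a + 1 + b + 2 = a + b + 3 by ring] using this
      have hibp := integral_Ioi_of_hasDerivAt_of_tendsto' hderiv (hint1.sub hint2)
        (KtendstoStep a (a+b+1) (by omega) c hc)
      simp only [zero_pow (Nat.succ_ne_zero a), zero_mul, sub_zero, sub_self] at hibp
      rw [integral_sub hint1 hint2, integral_const_mul, integral_const_mul, ih,
        sub_eq_zero] at hibp
      have hab2 : ((a:ℝ)+b+2) ≠ 0 := by positivity
      have h2 : ∫ t in Ioi (0:ℝ), t^(a+1) * ((c+t)^(a+b+3))⁻¹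
          = (((a:ℝ)+1)/((a:ℝ)+b+2)) * ((a.factorial * b.factorial / (a + b + 1).factorial) * (c ^ (b+1))⁻¹) := by
        rw [div_mul_eq_mul_div, eq_div_iff hab2]
        linarith [hibp]
      have hfac : ((a+b+1).factorial : ℝ) ≠ 0 := Nat.cast_ne_zero.mpr (Nat.factorial_ne_zero _)
      have e1 : (((a+1).factorial : ℕ) : ℝ) = ((a:ℝ)+1) * a.factorial := by
        rw [Nat.factorial_succ]; push_cast; ring
      have e2 : (((a+1+b+1).factorial : ℕ) : ℝ) = ((a:ℝ)+b+2) * (a+b+1).factorial := by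
        rw [show a+1+b+1 = (a+b+1)+1 by ring, Nat.factorial_succ]; push_cast; ring
      rw [show a + 1 + b + 2 = a + b + 3 by ring, h2, e1, e2]
      field_simp

lemma Ccont (a m : ℕ) (c : ℝ) (hc : 0 < c) :
    Continuous (fun w : ℂ => ‖w‖ ^ (2*a) * ((c + ‖w‖ ^ 2) ^ m)⁻¹) := by
  refine (continuous_norm.pow _).mul
    (Continuous.inv₀ ((continuous_const.add (continuous_norm.pow 2)).pow m) ?_)
  intro w
  have : (0:ℝ) < c + ‖w‖ ^ 2 := by positivity
  positivity

lemma Cval (a b : ℕ) (c : ℝ) (hc : 0 < c) :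
    ∫ w : ℂ, ‖w‖ ^ (2*a) * ((c + ‖w‖ ^ 2) ^ (a+b+2))⁻¹
      = Real.pi * ((a.factorial * b.factorial / (a + b + 1).factorial) * (c ^ (b+1))⁻¹) := by
  have hradial : ∀ w : ℂ, ‖w‖ ^ (2*a) * ((c + ‖w‖ ^ 2) ^ (a+b+2))⁻¹
      = (fun r : ℝ => r ^ (2*a) * ((c + r ^ 2) ^ (a+b+2))⁻¹) ‖w‖ := fun w => by
    simp
  rw [funext hradial]
  rw [integral_fun_norm_addHaar (volume : Measure ℂ)
    (fun r : ℝ => r ^ (2*a) * ((c + r ^ 2) ^ (a+b+2))⁻¹)]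
  have hdim : Module.finrank ℝ ℂ = 2 := Complex.finrank_real_complex
  rw [hdim]
  have hball : ((volume : Measure ℂ) (Metric.ball 0 1)).toReal = Real.pi := by
    rw [Complex.volume_ball]
    simp [ENNReal.toReal_mul]
  rw [measureReal_def, hball]
  have key : ∫ y in Ioi (0:ℝ), y ^ (2 - 1) • (y ^ (2*a) * ((c + y ^ 2) ^ (a+b+2))⁻¹)
      = (2:ℝ)⁻¹ * ∫ t in Ioi (0:ℝ), t ^ a * ((c + t) ^ (a+b+2))⁻¹ := by
    rw [← integral_comp_rpow_Ioi_of_pos (g := fun t : ℝ => t ^ a * ((c + t) ^ (a+b+2))⁻¹)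
      (p := 2) zero_lt_two, ← integral_const_mul]
    refine setIntegral_congr_fun measurableSet_Ioi (fun y hy => ?_)
    have hy0 : (0:ℝ) < y := hy
    have h2 : y ^ ((2:ℝ) - 1) = y := by
      norm_num
    have h3 : y ^ (2:ℝ) = y ^ 2 := by
      rw [show (2:ℝ) = ((2:ℕ):ℝ) by norm_num, Real.rpow_natCast]
    simp only [smul_eq_mul, h2, h3, pow_one]
    rw [pow_mul y 2 a]
    ring
  rw [key, Kval a b c hc]
  simp
  ring

lemma Cint (a b : ℕ) (c : ℝ) (hc : 0 < c) :
    Integrable (fun w : ℂ => ‖w‖ ^ (2*a) * ((c + ‖w‖ ^ 2) ^ (a+b+2))⁻¹) := by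
  set d := min c 1 with hd
  have hd0 : 0 < d := lt_min hc zero_lt_one
  have hC : (0:ℝ) < 4 * (d^2 * c^b)⁻¹ := by positivity
  have hnr : ((Module.finrank ℝ ℂ : ℝ)) < 3 := by
    rw [Complex.finrank_real_complex]; norm_num
  refine ((integrable_one_add_norm (μ := volume) hnr).const_mul
    (4 * (d^2 * c^b)⁻¹)).mono' ((Ccont a (a+b+2) c hc).aestronglyMeasurable) ?_
  refine Filter.Eventually.of_forall (fun w => ?_)
  set t := ‖w‖ with ht
  have ht0 : 0 ≤ t := norm_nonneg w
  have hP : (0:ℝ) < c + t^2 := by positivity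
  have hrpow : (1 + t : ℝ) ^ (-(3:ℝ)) = (((1:ℝ) + t)^3)⁻¹ := by
    rw [Real.rpow_neg (by positivity), show (3:ℝ) = ((3:ℕ):ℝ) by norm_num,
      Real.rpow_natCast]
  rw [Real.norm_eq_abs, abs_of_nonneg (by positivity), hrpow]
  -- chain of bounds
  have h1 : t ^ (2*a) * ((c + t^2) ^ (a+b+2))⁻¹ ≤ ((c + t^2) ^ (b+2))⁻¹ := by
    have e : (c + t^2) ^ (a+b+2) = (c + t^2) ^ a * (c + t^2) ^ (b+2) := by
      rw [← pow_add, show a + (b+2) = a + b + 2 from by omega]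
    have hX : t ^ (2*a) ≤ (c + t^2) ^ a := by
      rw [pow_mul]
      exact pow_le_pow_left₀ (sq_nonneg t) (by linarith) a
    rw [e, mul_inv]
    calc t ^ (2*a) * (((c + t^2) ^ a)⁻¹ * ((c + t^2) ^ (b+2))⁻¹)
        ≤ (c + t^2) ^ a * (((c + t^2) ^ a)⁻¹ * ((c + t^2) ^ (b+2))⁻¹) :=
          mul_le_mul_of_nonneg_right hX (by positivity)
      _ = ((c + t^2) ^ (b+2))⁻¹ := by
          rw [← mul_assoc, mul_inv_cancel₀ (by positivity), one_mul]
  have hbc : c ^ b ≤ (c + t^2)^b := by gcongr; nlinarith [sq_nonneg t]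
  have hdc : d ≤ c := min_le_left _ _
  have hd1 : d ≤ 1 := min_le_right _ _
  have key : d^2 * (1+t)^3 ≤ 4 * (c + t^2)^2 := by
    have h5 : d * (1 + t^2) ≤ c + t^2 := by nlinarith
    have h6 : (1+t)^2 ≤ 2 * (1 + t^2) := by nlinarith [sq_nonneg (t-1)]
    have h7 : (1+t)^3 ≤ (1+t)^4 := by nlinarith
    have h8 : (1+t)^4 ≤ 4 * (1+t^2)^2 := by nlinarith [sq_nonneg ((1+t)^2), sq_nonneg (1+t^2)]
    have k1 : d^2 * (1+t)^3 ≤ d^2 * (4 * (1+t^2)^2) :=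
      mul_le_mul_of_nonneg_left (h7.trans h8) (sq_nonneg d)
    have k3 : (d*(1+t^2))^2 ≤ (c+t^2)^2 := by
      refine pow_le_pow_left₀ ?_ h5 2
      nlinarith [sq_nonneg t]
    nlinarith [k1, k3]
  have h2 : ((c + t^2) ^ (b+2))⁻¹ ≤ (4 * (d^2 * c^b)⁻¹) * (((1:ℝ) + t)^3)⁻¹ := by
    have e4 : (4 * (d^2 * c^b)⁻¹) * (((1:ℝ)+t)^3)⁻¹ = 4 / ((d^2*c^b) * ((1+t)^3)) := by
      field_simp
    rw [e4, inv_eq_one_div, div_le_div_iff₀ (by positivity) (by positivity), one_mul]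
    calc d^2*c^b * (1+t)^3 = (d^2 * (1+t)^3) * c^b := by ring
      _ ≤ (4 * (c + t^2)^2) * (c + t^2)^b :=
          mul_le_mul key hbc (by positivity) (by positivity)
      _ = 4 * (c + t^2)^(b+2) := by rw [show (b+2) = 2 + b by ring, pow_add]; ring
  calc t ^ (2*a) * ((c + t^2) ^ (a+b+2))⁻¹ ≤ ((c + t^2) ^ (b+2))⁻¹ := h1
    _ ≤ (4 * (d^2 * c^b)⁻¹) * (((1:ℝ) + t)^3)⁻¹ := h2

lemma Clint (a b : ℕ) (c : ℝ) (hc : 0 < c) :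
    ∫⁻ w : ℂ, ENNReal.ofReal (‖w‖ ^ (2*a) * ((c + ‖w‖ ^ 2) ^ (a+b+2))⁻¹)
      = ENNReal.ofReal (Real.pi *
        ((a.factorial * b.factorial / (a + b + 1).factorial) * (c ^ (b+1))⁻¹)) := by
  rw [← ofReal_integral_eq_lintegral_ofReal (Cint a b c hc)
    (Filter.Eventually.of_forall fun w => by positivity), Cval a b c hc]

lemma PicontF (n : ℕ) (a : Fin n → ℕ) (m : ℕ) (c : ℝ) (hc : 0 < c) :
    Continuous (fun z : Fin n → ℂ =>
      (∏ i, ‖z i‖ ^ (2 * a i)) * ((c + ∑ i, ‖z i‖ ^ 2) ^ m)⁻¹) := by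
  have h1 : Continuous (fun z : Fin n → ℂ => ∏ i, ‖z i‖ ^ (2 * a i)) :=
    continuous_finset_prod _ fun i _ =>
      (continuous_norm.comp (continuous_apply i)).pow _
  have h2 : Continuous (fun z : Fin n → ℂ => c + ∑ i, ‖z i‖ ^ 2) :=
    continuous_const.add (continuous_finset_sum _ fun i _ =>
      ((continuous_norm.comp (continuous_apply i)).pow 2))
  refine h1.mul (Continuous.inv₀ (h2.pow m) fun z => ?_)
  have : (0:ℝ) < c + ∑ i, ‖z i‖ ^ 2 := by positivity
  positivity

lemma mainL (n : ℕ) (a : Fin n → ℕ) (b : ℕ) (c : ℝ) (hc : 0 < c) :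
    ∫⁻ z : Fin n → ℂ, ENNReal.ofReal ((∏ i, ‖z i‖ ^ (2 * a i)) *
        ((c + ∑ i, ‖z i‖ ^ 2) ^ (∑ i, a i + n + 1 + b))⁻¹)
      = ENNReal.ofReal ((Real.pi ^ n * ((∏ i, ((a i).factorial : ℝ)) * b.factorial /
          (∑ i, a i + n + b).factorial)) * (c ^ (b+1))⁻¹) := by
  induction n generalizing b c with
  | zero =>
      simp only [Finset.univ_eq_empty, Finset.prod_empty, Finset.sum_empty, one_mul, add_zero,
        zero_add, pow_zero]
      rw [lintegral_const]
      have hvol : (volume : Measure (Fin 0 → ℂ)) Set.univ = 1 := by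
        rw [volume_pi, Measure.pi_univ]
        simp
      rw [hvol, mul_one]
      congr 1
      rw [div_self (Nat.cast_ne_zero.mpr (Nat.factorial_ne_zero b)), one_mul, add_comm 1 b]
  | succ n ih =>
      set s' := ∑ i : Fin n, a (Fin.succ i) with hs'
      set b'' := a 0 + b + 1 with hb''
      have hMeq : ∑ i, a i + (n+1) + 1 + b = s' + n + 1 + b'' := by
        rw [Fin.sum_univ_succ]; omega
      set F : (Fin (n+1) → ℂ) → ℝ≥0∞ := fun z => ENNReal.ofReal
        ((∏ i, ‖z i‖ ^ (2 * a i)) *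
          ((c + ∑ i, ‖z i‖ ^ 2) ^ (∑ i, a i + (n+1) + 1 + b))⁻¹) with hF
      have hFmeas : Measurable F :=
        ENNReal.measurable_ofReal.comp (PicontF (n+1) a _ c hc).measurable
      have hmp := (measurePreserving_piFinSuccAbove
        (fun _ : Fin (n+1) => (volume : Measure ℂ)) 0).symm
      have step1 : ∫⁻ z : Fin (n+1) → ℂ, F z
          = ∫⁻ p : ℂ × (Fin n → ℂ), F ((MeasurableEquiv.piFinSuccAbove
              (fun _ : Fin (n+1) => ℂ) 0).symm p)
            ∂((volume : Measure ℂ).prod (Measure.pi fun _ => (volume : Measure ℂ))) := by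
        rw [volume_pi, ← hmp.lintegral_comp hFmeas]
      have hpt : ∀ w : ℂ, ∀ y : Fin n → ℂ,
          F ((MeasurableEquiv.piFinSuccAbove (fun _ : Fin (n+1) => ℂ) 0).symm (w, y))
          = ENNReal.ofReal (‖w‖ ^ (2 * a 0)) *
            ENNReal.ofReal ((∏ i, ‖y i‖ ^ (2 * a (Fin.succ i))) *
              (((c + ‖w‖ ^ 2) + ∑ i, ‖y i‖ ^ 2)
                ^ (∑ i, a (Fin.succ i) + n + 1 + b''))⁻¹) := by
        intro w y
        have hz : ((MeasurableEquiv.piFinSuccAbove (fun _ : Fin (n+1) => ℂ) 0).symm (w, y))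
            = Fin.cons w y := by
          simp [MeasurableEquiv.piFinSuccAbove, Fin.insertNthEquiv, Fin.insertNth_zero]
        rw [hz, hF]
        simp only [Fin.prod_univ_succ, Fin.sum_univ_succ, Fin.cons_zero, Fin.cons_succ]
        rw [← ENNReal.ofReal_mul (by positivity)]
        congr 1
        have hexp : a 0 + ∑ i : Fin n, a (Fin.succ i) + (n+1) + 1 + b
            = ∑ i : Fin n, a (Fin.succ i) + n + 1 + b'' := by omega
        rw [hexp, ← add_assoc, mul_assoc]
      have inner : ∀ w : ℂ,
          (∫⁻ y : Fin n → ℂ, F ((MeasurableEquiv.piFinSuccAbove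
              (fun _ : Fin (n+1) => ℂ) 0).symm (w, y)) ∂(Measure.pi fun _ => volume))
          = ENNReal.ofReal (Real.pi ^ n * ((∏ i : Fin n, ((a (Fin.succ i)).factorial : ℝ)) *
              b''.factorial / (s' + n + b'').factorial)) *
            ENNReal.ofReal (‖w‖ ^ (2 * a 0) *
              (((c + ‖w‖ ^ 2) ^ (a 0 + b + 2))⁻¹)) := by
        intro w
        have hcw : 0 < c + ‖w‖ ^ 2 := by positivity
        calc (∫⁻ y : Fin n → ℂ, F ((MeasurableEquiv.piFinSuccAbove
              (fun _ : Fin (n+1) => ℂ) 0).symm (w, y)) ∂(Measure.pi fun _ => volume))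
            = ∫⁻ y : Fin n → ℂ, ENNReal.ofReal (‖w‖ ^ (2 * a 0)) *
              ENNReal.ofReal ((∏ i, ‖y i‖ ^ (2 * a (Fin.succ i))) *
                (((c + ‖w‖ ^ 2) + ∑ i, ‖y i‖ ^ 2)
                  ^ (∑ i, a (Fin.succ i) + n + 1 + b''))⁻¹) ∂(Measure.pi fun _ => volume) := by
              exact lintegral_congr (hpt w)
          _ = ENNReal.ofReal (‖w‖ ^ (2 * a 0)) *
              ∫⁻ y : Fin n → ℂ, ENNReal.ofReal ((∏ i, ‖y i‖ ^ (2 * a (Fin.succ i))) *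
                (((c + ‖w‖ ^ 2) + ∑ i, ‖y i‖ ^ 2)
                  ^ (∑ i, a (Fin.succ i) + n + 1 + b''))⁻¹) ∂(Measure.pi fun _ => volume) :=
              lintegral_const_mul' _ _ ENNReal.ofReal_ne_top
          _ = ENNReal.ofReal (‖w‖ ^ (2 * a 0)) *
              ENNReal.ofReal ((Real.pi ^ n * ((∏ i : Fin n, ((a (Fin.succ i)).factorial : ℝ)) *
                b''.factorial / (∑ i : Fin n, a (Fin.succ i) + n + b'').factorial)) *
                (((c + ‖w‖ ^ 2) ^ (b''+1))⁻¹)) := by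
              rw [← volume_pi, ih (fun i => a (Fin.succ i)) b'' (c + ‖w‖ ^ 2) hcw]
          _ = ENNReal.ofReal (Real.pi ^ n * ((∏ i : Fin n, ((a (Fin.succ i)).factorial : ℝ)) *
                b''.factorial / (s' + n + b'').factorial)) *
              ENNReal.ofReal (‖w‖ ^ (2 * a 0) *
                (((c + ‖w‖ ^ 2) ^ (a 0 + b + 2))⁻¹)) := by
              rw [← ENNReal.ofReal_mul (by positivity), ← ENNReal.ofReal_mul (by positivity)]
              congr 1
              rw [show b'' + 1 = a 0 + b + 2 by omega, ← hs']
              ring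
      rw [step1, lintegral_prod (fun p : ℂ × (Fin n → ℂ) =>
        F ((MeasurableEquiv.piFinSuccAbove (fun _ : Fin (n+1) => ℂ) 0).symm p))
        ((hFmeas.comp (MeasurableEquiv.measurable _)).aemeasurable)]
      simp_rw [inner]
      rw [lintegral_const_mul' _ _ ENNReal.ofReal_ne_top,
        show (2 : ℕ) * a 0 = 2 * a 0 from rfl]
      have hcl := Clint (a 0) b c hc
      rw [show a 0 + b + 2 = (a 0) + b + 2 from rfl, hcl,
        ← ENNReal.ofReal_mul (by positivity)]
      congr 1
      have hNeq : s' + n + b'' = ∑ i, a i + (n+1) + b := by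
        rw [Fin.sum_univ_succ]; omega
      rw [hNeq]
      rw [Fin.prod_univ_succ]
      have hfac1 : (((a 0 + b + 1).factorial : ℕ) : ℝ) ≠ 0 :=
        Nat.cast_ne_zero.mpr (Nat.factorial_ne_zero _)
      have hfac2 : (((∑ i, a i + (n+1) + b).factorial : ℕ) : ℝ) ≠ 0 :=
        Nat.cast_ne_zero.mpr (Nat.factorial_ne_zero _)
      rw [hb'']
      push_cast
      field_simp
      ring

end FSaux

/-- Fubini–Study `L²` norms of monomial sections of `O(k)` on `ℙⁿ`:
`(1/πⁿ) ∫_{ℂⁿ} (∏ |z_i|^(2aᵢ)) / (1 + Σ |z_i|²)^(k+n+1) dλ = a₀!·a₁!⋯aₙ!/(k+n)!`,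
where `a₀ = k - (a₁ + ⋯ + aₙ)`. -/
theorem fubini_study_L2_norm_Pn (n : ℕ) (hn : 1 ≤ n) (k : ℕ) (a : Fin n → ℕ)
    (ha : ∑ i, a i ≤ k) :
    (1 / Real.pi ^ n) *
        ∫ z : Fin n → ℂ,
          (∏ i, ‖z i‖ ^ (2 * a i)) /
            (1 + ∑ i, ‖z i‖ ^ 2) ^ (k + n + 1) =
      (((k - ∑ i, a i).factorial : ℝ) * ∏ i, ((a i).factorial : ℝ)) / (k + n).factorial := by
  set b := k - ∑ i, a i with hb
  have hexp : ∑ i, a i + n + 1 + b = k + n + 1 := by omega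
  have hden : ∑ i, a i + n + b = k + n := by omega
  have hm := mainL n a b 1 one_pos
  rw [hexp, hden] at hm
  simp only [one_pow, inv_one, mul_one] at hm
  simp_rw [div_eq_mul_inv]
  rw [integral_eq_lintegral_of_nonneg_ae
    (Filter.Eventually.of_forall (fun z : Fin n → ℂ => by
      have : (0:ℝ) < 1 + ∑ i, ‖z i‖ ^ 2 := by positivity
      positivity))
    ((PicontF n a (k+n+1) 1 one_pos).aestronglyMeasurable)]
  rw [hm, ENNReal.toReal_ofReal (by positivity)]
  have hpi : (Real.pi : ℝ) ^ n ≠ 0 := by positivity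
  field_simp
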